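/- Let N be a positive natural number, let Ω ⊆ ℝ^N be a measurable set, let q, p be real numbers with 0 < q < 1 < p, and let λ > 0. Let k, h : ℝ^N → ℝ be measurable and nonnegative almost everywhere on Ω, and let u : ℝ^N → ℝ be differentiable and nonnegative almost everywhere on Ω, with the integrals ∫_Ω |∇u|² dx, ∫_Ω k·u^{q+1} dx and ∫_Ω h·u^{p+1} dx all finite. Assume ∫_Ω |∇u|² dx = λ·∫_Ω k·u^{q+1} dx + ∫_Ω h·u^{p+1} dx, assume ∫_Ω |∇u|² dx ≥ λ·q·∫_Ω k·u^{q+1} dx + p·∫_Ω h·u^{p+1} dx, and assume ∫_Ω k·u^{q+1} dx > 0. Then the energy E(u) := (1/2)·∫_Ω |∇u|² dx − (λ/(q+1))·∫_Ω k·u^{q+1} dx − (1/(p+1))·∫_Ω h·u^{p+1} dx satisfies E(u) < 0. -/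

import Mathlib

open MeasureTheory

/-- under the energy identity and semi-stability, and if
`∫ k·u^{q+1} > 0`, the energy
`E(u) = (1/2)∫|∇u|² − (λ/(q+1))∫ k·u^{q+1} − (1/(p+1))∫ h·u^{p+1}` is negative. -/
theorem stmt_6 (N : ℕ) (hN : 0 < N) (Ω : Set (EuclideanSpace ℝ (Fin N)))
    (hΩ : MeasurableSet Ω) (q p lam : ℝ)
    (hq0 : 0 < q) (hq1 : q < 1) (hp : 1 < p) (hlam : 0 < lam)
    (k h : EuclideanSpace ℝ (Fin N) → ℝ) (hk : Measurable k) (hh : Measurable h)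
    (hk0 : ∀ᵐ x ∂(volume.restrict Ω), 0 ≤ k x)
    (hh0 : ∀ᵐ x ∂(volume.restrict Ω), 0 ≤ h x)
    (u : EuclideanSpace ℝ (Fin N) → ℝ) (hu : Differentiable ℝ u)
    (hu0 : ∀ᵐ x ∂(volume.restrict Ω), 0 ≤ u x)
    (hI1 : IntegrableOn (fun x => ‖fderiv ℝ u x‖ ^ 2) Ω volume)
    (hI2 : IntegrableOn (fun x => k x * u x ^ (q + 1)) Ω volume)
    (hI3 : IntegrableOn (fun x => h x * u x ^ (p + 1)) Ω volume)
    (hEn : (∫ x in Ω, ‖fderiv ℝ u x‖ ^ 2) =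
        lam * (∫ x in Ω, k x * u x ^ (q + 1)) + ∫ x in Ω, h x * u x ^ (p + 1))
    (hStab : (∫ x in Ω, ‖fderiv ℝ u x‖ ^ 2) ≥
        lam * q * (∫ x in Ω, k x * u x ^ (q + 1)) + p * ∫ x in Ω, h x * u x ^ (p + 1))
    (hpos : (0 : ℝ) < ∫ x in Ω, k x * u x ^ (q + 1)) :
    (1 / 2) * (∫ x in Ω, ‖fderiv ℝ u x‖ ^ 2)
        - (lam / (q + 1)) * (∫ x in Ω, k x * u x ^ (q + 1))
        - (1 / (p + 1)) * (∫ x in Ω, h x * u x ^ (p + 1)) < 0 := by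
  have hB : (0:ℝ) ≤ ∫ x in Ω, h x * u x ^ (p + 1) := by
    apply integral_nonneg_of_ae
    filter_upwards [hh0, hu0] with x h1 h2
    exact mul_nonneg h1 (Real.rpow_nonneg h2 _)
  set A := ∫ x in Ω, k x * u x ^ (q + 1)
  set B := ∫ x in Ω, h x * u x ^ (p + 1)
  set G := ∫ x in Ω, ‖fderiv ℝ u x‖ ^ 2
  have hq1' : (0:ℝ) < q + 1 := by linarith
  have hp1' : (0:ℝ) < p + 1 := by linarith
  have hrw : (1/2) * G - lam/(q+1) * A - 1/(p+1) * B
      = ((q+1)*(p+1)*G - 2*(p+1)*(lam*A) - 2*(q+1)*B) / (2*(q+1)*(p+1)) := by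
    field_simp
  rw [hrw]
  apply div_neg_of_neg_of_pos _ (by positivity)
  have hkey : (p - 1) * B ≤ lam * (1 - q) * A := by nlinarith [hStab, hEn]
  have hprod : 0 < lam * A * ((1 - q) * (p - q)) := by
    have : (0:ℝ) < (1 - q) * (p - q) := by nlinarith
    exact mul_pos (mul_pos hlam hpos) this
  rw [hEn]
  nlinarith [mul_le_mul_of_nonneg_left hkey hq1'.le, hprod]
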